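/- arXiv:1410.2126 — 3 statements merged into one kernel-verified Lean document; each statement's English description precedes it below -/
import Mathlib

section
/- (Functional equation of the Poincaré series.) For every fractional ideal I of O and every v ∈ ℤ^p, α_{I^∨}(v) = (−1)^{p+1} · α_I(γ − v); equivalently, the Poincaré polynomials P_I(t) = Σ_v α_I(v) t^v satisfy P_{I^∨}(t_1,…,t_p) = (−1)^{p+1} t^γ P_I(1/t_1,…,1/t_p). -/
open scoped Classical

set_option synthInstance.maxHeartbeats 1000000
set_option maxHeartbeats 1000000

noncomputable section

/-- `K`, the total ring of fractions: the product of `p` copies of the field of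
formal Laurent series over `ℂ`. -/
abbrev KK (p : ℕ) : Type := Fin p → LaurentSeries ℂ

lemma algebraMap_component {p : ℕ} (c : ℂ) (i : Fin p) :
    algebraMap ℂ (KK p) c i = HahnSeries.single (0:ℤ) c := by
  rw [Pi.algebraMap_apply, HahnSeries.algebraMap_apply', PowerSeries.algebraMap_apply,
      Algebra.algebraMap_self_apply, HahnSeries.ofPowerSeries_C, HahnSeries.C_apply]

lemma smul_eq_algebraMap_mul {p : ℕ} (c : ℂ) (x : KK p) :
    c • x = algebraMap ℂ (KK p) c * x := by
  funext i
  rw [Pi.smul_apply, Pi.mul_apply, algebraMap_component,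
      HahnSeries.single_zero_mul_eq_smul]

/-- The `t`-adic order of a Laurent series, with `⊤` for the zero series. -/
def valC (g : LaurentSeries ℂ) : WithTop ℤ :=
  if g = 0 then ⊤ else (g.order : WithTop ℤ)

/-- The value vector `val(g) = (val_1 g, …, val_p g)`. -/
def valVec {p : ℕ} (g : KK p) : Fin p → WithTop ℤ := fun i => valC (g i)

/-- The set `t^α·O~` of tuples of Laurent series whose `i`-th component has all
coefficients in degrees below `α i` equal to zero (equivalently, whose `i`-th
component has `t`-adic order at least `α i`), as a `ℂ`-submodule of `K`.
For `α = 0` this is `O~` itself. -/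
def stdMod (p : ℕ) (α : Fin p → ℤ) : Submodule ℂ (KK p) where
  carrier := {g | ∀ i, ∀ j : ℤ, j < α i → (g i).coeff j = 0}
  add_mem' := by
    intro a b ha hb i j hj
    simp [HahnSeries.coeff_add, ha i j hj, hb i j hj]
  zero_mem' := by
    intro i j hj
    simp
  smul_mem' := by
    intro c a ha i j hj
    simp [HahnSeries.coeff_smul, ha i j hj]

/-- The dual `S^∨ = {h ∈ K : h·S ⊆ O}` of a subset `S ⊆ K`, as a
`ℂ`-submodule of `K`. -/
def dualMod {p : ℕ} (O : Subalgebra ℂ (KK p)) (S : Set (KK p)) :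
    Submodule ℂ (KK p) where
  carrier := {h | ∀ g ∈ S, h * g ∈ O}
  add_mem' := by
    intro a b ha hb g hg
    simpa [add_mul] using add_mem (ha g hg) (hb g hg)
  zero_mem' := by
    intro g hg
    simpa using O.zero_mem
  smul_mem' := by
    intro c a ha g hg
    rw [smul_eq_algebraMap_mul, mul_assoc]
    exact O.mul_mem (O.algebraMap_mem c) (ha g hg)

/-- `val(S)`: values of the non-zerodivisors of `K` (elements all of whose
components are nonzero) belonging to `S`. -/
def vals {p : ℕ} (S : Set (KK p)) : Set (Fin p → ℤ) :=
  {v | ∃ g ∈ S, ∀ i, valC (g i) = (v i : WithTop ℤ)}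

/-- `valbar(S)`: values of all elements of `S`. -/
def valsBar {p : ℕ} (S : Set (KK p)) : Set (Fin p → WithTop ℤ) :=
  {v | ∃ g ∈ S, ∀ i, valC (g i) = v i}

/-- `I` is a fractional ideal of `O`: an `O`-stable `ℂ`-submodule of `K` which
is finitely generated over `O` and contains a non-zerodivisor of `K`. -/
def IsFracIdeal {p : ℕ} (O : Subalgebra ℂ (KK p)) (I : Submodule ℂ (KK p)) : Prop :=
  (∀ a ∈ O, ∀ x ∈ I, a * x ∈ I) ∧
  (∃ s : Finset (KK p), (↑s : Set (KK p)) ⊆ (I : Set (KK p)) ∧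
    ∀ x ∈ I, ∃ a : KK p → KK p, (∀ g ∈ s, a g ∈ O) ∧ x = ∑ g ∈ s, a g * g) ∧
  (∃ g ∈ I, ∀ i, g i ≠ 0)

/-- `Δ_i(v, M)`. -/
def DeltaI {p : ℕ} (i : Fin p) (v : Fin p → ℤ) (M : Set (Fin p → ℤ)) :
    Set (Fin p → ℤ) :=
  {α ∈ M | α i = v i ∧ ∀ j, j ≠ i → v j < α j}

/-- `Δ(v, M) = ⋃ i, Δ_i(v, M)`. -/
def DeltaSet {p : ℕ} (v : Fin p → ℤ) (M : Set (Fin p → ℤ)) : Set (Fin p → ℤ) :=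
  ⋃ i : Fin p, DeltaI i v M

/-- `Λ_i(v, M)`. -/
def LamSet {p : ℕ} (i : Fin p) (v : Fin p → ℤ) (M : Set (Fin p → ℤ)) :
    Set (Fin p → ℤ) :=
  {α ∈ M | α i = v i ∧ v ≤ α}

/-- `dim_ℂ (B / A)`: the dimension of the image of `B` in `K ⧸ A`
(which is canonically `B/(A ∩ B)`). -/
def qdim {p : ℕ} (A B : Submodule ℂ (KK p)) : ℕ :=
  Module.finrank ℂ ↥(B.map A.mkQ)

/-- `c_I(v) = dim_ℂ (I_v / I_{v+1})`, where `I_v = {g ∈ I : val g ≥ v}`. -/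
def cI {p : ℕ} (I : Submodule ℂ (KK p)) (v : Fin p → ℤ) : ℕ :=
  qdim (I ⊓ stdMod p (v + 1)) (I ⊓ stdMod p v)

/-- `α_I(v) = Σ_{J ⊆ {1,…,p}} (−1)^{p−|J|} c_I(v − e_J)`. -/
def alphaI {p : ℕ} (I : Submodule ℂ (KK p)) (v : Fin p → ℤ) : ℤ :=
  ∑ J : Finset (Fin p),
    (-1 : ℤ) ^ (p - J.card) * cI I (fun j => v j - if j ∈ J then 1 else 0)

/-- `O` itself, as a `ℂ`-submodule of `K`. -/
def algSubmodule {p : ℕ} (O : Subalgebra ℂ (KK p)) : Submodule ℂ (KK p) where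
  carrier := O
  add_mem' := fun ha hb => O.add_mem ha hb
  zero_mem' := O.zero_mem
  smul_mem' := fun c x hx => by
    rw [smul_eq_algebraMap_mul]
    exact O.mul_mem (O.algebraMap_mem c) hx

section Part0
variable {p : ℕ}

lemma mem_stdMod {α : Fin p → ℤ} {g : KK p} :
    g ∈ stdMod p α ↔ ∀ i, ∀ j : ℤ, j < α i → (g i).coeff j = 0 := Iff.rfl

lemma stdMod_antitone {a b : Fin p → ℤ} (h : a ≤ b) : stdMod p b ≤ stdMod p a :=
  fun g hg i j hj => hg i j (lt_of_lt_of_le hj (h i))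

lemma mul_mem_stdMod {a b : Fin p → ℤ} {x y : KK p} (hx : x ∈ stdMod p a)
    (hy : y ∈ stdMod p b) : x * y ∈ stdMod p (a + b) := by
  intro i j hj
  rw [Pi.mul_apply, HahnSeries.coeff_mul]
  refine Finset.sum_eq_zero fun ij hij => ?_
  rw [Finset.mem_addAntidiagonal] at hij
  have hsum : ij.1 + ij.2 = j := hij.2.2
  have hj' : j < a i + b i := by simpa using hj
  rcases lt_or_ge ij.1 (a i) with h | h
  · rw [hx i ij.1 h, zero_mul]
  · rw [hy i ij.2 (by omega), mul_zero]

lemma one_mem_stdMod_zero : (1 : KK p) ∈ stdMod p 0 := by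
  intro i j hj
  simp only [Pi.zero_apply] at hj
  rw [Pi.one_apply, HahnSeries.coeff_one, if_neg (by omega : ¬ j = 0)]

/-- `t^w` -/
def TT (w : Fin p → ℤ) : KK p := fun i => HahnSeries.single (w i) 1

lemma TT_mem (w : Fin p → ℤ) : TT w ∈ stdMod p w := by
  intro i j hj
  rw [TT, HahnSeries.coeff_single, if_neg (by omega : ¬ j = w i)]

lemma TT_mul_TT (a b : Fin p → ℤ) : TT a * TT b = TT (a + b) := by
  funext i
  simp only [Pi.mul_apply, TT, Pi.add_apply, HahnSeries.single_mul_single, mul_one]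

lemma TT_zero : TT (0 : Fin p → ℤ) = 1 := by
  funext i
  rw [TT, Pi.zero_apply, Pi.one_apply]
  exact HahnSeries.single_zero_one

lemma TT_mul_coeff (w : Fin p → ℤ) (x : KK p) (i : Fin p) (j : ℤ) :
    ((x * TT w) i).coeff (j + w i) = (x i).coeff j := by
  rw [Pi.mul_apply, TT]
  simpa using HahnSeries.coeff_mul_single_add (r := (1:ℂ)) (x := x i) (a := j) (b := w i)

lemma mul_TT_mem_iff {v w : Fin p → ℤ} {x : KK p} :
    x * TT w ∈ stdMod p (v + w) ↔ x ∈ stdMod p v := by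
  constructor
  · intro h i j hj
    have := h i (j + w i) (by simpa using by omega : j + w i < (v + w) i)
    rwa [TT_mul_coeff] at this
  · intro h
    exact mul_mem_stdMod h (TT_mem w)

/-- basis elements `t^j` in slot `i` -/
def EE (i : Fin p) (j : ℤ) : KK p := Pi.single i (HahnSeries.single j 1)

lemma EE_apply (i : Fin p) (j : ℤ) (k : Fin p) :
    EE i j k = if k = i then HahnSeries.single j 1 else 0 := by
  rw [EE, Pi.single_apply]

lemma EE_coeff (i : Fin p) (j : ℤ) (k : Fin p) (l : ℤ) :
    (EE i j k).coeff l = if k = i ∧ l = j then 1 else 0 := by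
  rw [EE_apply]
  split
  · rw [HahnSeries.coeff_single]; rename_i h; simp [h]
  · rename_i h; simp [h]

lemma EE_mem_stdMod {i : Fin p} {j : ℤ} {a : Fin p → ℤ} (h : a i ≤ j) :
    EE i j ∈ stdMod p a := by
  intro k l hl
  rw [EE_coeff]
  rw [if_neg]
  rintro ⟨rfl, rfl⟩
  omega

end Part0
section Part1
variable {p : ℕ}

/-- generators of the finite window -/
def genF (a b : Fin p → ℤ) : Finset (KK p) :=
  Finset.univ.biUnion fun i => (Finset.Ico (a i) (b i)).image (fun j => EE i j)

/-- finite-dimensional window submodule -/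
def Wfin (a b : Fin p → ℤ) : Submodule ℂ (KK p) :=
  Submodule.span ℂ (↑(genF a b) : Set (KK p))

instance Wfin_fd (a b : Fin p → ℤ) : FiniteDimensional ℂ (Wfin a b) :=
  FiniteDimensional.span_of_finite ℂ (Finset.finite_toSet _)

/-- upper truncation of a Laurent series: keep coefficients in degrees `≥ b` -/
def htrunc (b : ℤ) (f : LaurentSeries ℂ) : LaurentSeries ℂ where
  coeff := fun j => if b ≤ j then f.coeff j else 0
  isPWO_support' := f.isPWO_support.mono (by
    intro j hj
    simp only [Function.mem_support] at hj ⊢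
    intro h
    apply hj
    simp [h])

lemma htrunc_coeff (b : ℤ) (f : LaurentSeries ℂ) (j : ℤ) :
    (htrunc b f).coeff j = if b ≤ j then f.coeff j else 0 := rfl

/-- componentwise truncation -/
def truncV (b : Fin p → ℤ) (x : KK p) : KK p := fun i => htrunc (b i) (x i)

lemma truncV_mem (b : Fin p → ℤ) (x : KK p) : truncV b x ∈ stdMod p b := by
  intro i j hj
  rw [truncV, htrunc_coeff, if_neg (by omega)]

lemma sub_truncV_coeff (b : Fin p → ℤ) (x : KK p) (i : Fin p) (j : ℤ) :
    ((x - truncV b x) i).coeff j = if b i ≤ j then 0 else (x i).coeff j := by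
  rw [Pi.sub_apply, HahnSeries.coeff_sub, truncV, htrunc_coeff]
  split <;> ring

lemma mem_Wfin_of_coeff {a b : Fin p → ℤ} {x : KK p}
    (hx : ∀ i j, (x i).coeff j ≠ 0 → a i ≤ j ∧ j < b i) : x ∈ Wfin a b := by
  have hrw : x = ∑ i : Fin p, Pi.single i (x i) := (Finset.univ_sum_single x).symm
  rw [hrw]
  refine Submodule.sum_mem _ fun i _ => ?_
  have hxi : x i = ∑ j ∈ Finset.Ico (a i) (b i), (x i).coeff j • HahnSeries.single j 1 := by
    apply HahnSeries.coeff_inj.mp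
    funext k
    have : (∑ j ∈ Finset.Ico (a i) (b i), (x i).coeff j • HahnSeries.single j (1:ℂ)).coeff k
        = ∑ j ∈ Finset.Ico (a i) (b i), ((x i).coeff j • HahnSeries.single j (1:ℂ)).coeff k := by
      exact map_sum (HahnSeries.coeff.addMonoidHom k) _ _
    rw [this]
    by_cases hk : k ∈ Finset.Ico (a i) (b i)
    · rw [Finset.sum_eq_single_of_mem k hk (fun j _ hne => by
        rw [HahnSeries.coeff_smul, HahnSeries.coeff_single, if_neg (fun h => hne h.symm),
          smul_zero])]
      simp
    · rw [Finset.sum_eq_zero (fun j hj => by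
        rw [HahnSeries.coeff_smul, HahnSeries.coeff_single, if_neg (fun h => hk (by rwa [h])),
          smul_zero])]
      by_contra hc
      exact hk (Finset.mem_Ico.mpr (hx i k hc))
  rw [hxi]
  have hsingle : ∀ z : LaurentSeries ℂ,
      (Pi.single i z : KK p) = LinearMap.single ℂ (fun _ => LaurentSeries ℂ) i z := fun z => rfl
  rw [hsingle, map_sum]
  refine Submodule.sum_mem _ fun j hj => ?_
  rw [map_smul]
  refine Submodule.smul_mem _ _ (Submodule.subset_span ?_)
  have : (LinearMap.single ℂ (fun _ => LaurentSeries ℂ) i) (HahnSeries.single j (1:ℂ)) = EE i j := rfl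
  rw [this]
  simp only [genF, Finset.coe_biUnion, Finset.coe_univ, Set.mem_iUnion, Finset.coe_image]
  exact ⟨i, trivial, Set.mem_image_of_mem _ (by simpa using hj)⟩

end Part1
section Part2
variable {p : ℕ}

lemma stdMod_le_sup_Wfin (a b : Fin p → ℤ) (hab : a ≤ b) :
    stdMod p a ≤ stdMod p b ⊔ Wfin a b := by
  intro x hx
  refine Submodule.mem_sup.mpr ⟨truncV b x, truncV_mem b x, x - truncV b x, ?_, by ring⟩
  refine mem_Wfin_of_coeff fun i j hj => ?_
  rw [sub_truncV_coeff] at hj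
  by_cases h : b i ≤ j
  · rw [if_pos h] at hj; exact absurd rfl hj
  · rw [if_neg h] at hj
    have h2 : ¬ j < a i := fun hlt => hj (hx i j hlt)
    exact ⟨by omega, by omega⟩

lemma map_mkQ_self_eq_bot (C : Submodule ℂ (KK p)) : C.map C.mkQ = ⊥ := by
  rw [eq_bot_iff]
  rintro y ⟨c, hc, rfl⟩
  simpa [Submodule.mkQ_apply, Submodule.Quotient.mk_eq_zero] using hc

/-- finiteness criterion -/
lemma fdim_map_mkQ {A B C W : Submodule ℂ (KK p)} (hA : A = B ⊓ C) (h : B ≤ C ⊔ W)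
    [FiniteDimensional ℂ W] : FiniteDimensional ℂ (B.map A.mkQ) := by
  subst hA
  set A := B ⊓ C
  have hAC : A ≤ C := inf_le_right
  let φ : (KK p ⧸ A) →ₗ[ℂ] (KK p ⧸ C) := A.mapQ C LinearMap.id hAC
  have hφ : ∀ x : KK p, φ (A.mkQ x) = C.mkQ x := fun x => rfl
  let f : (B.map A.mkQ) →ₗ[ℂ] (KK p ⧸ C) := φ.comp (B.map A.mkQ).subtype
  have hrange : ∀ y : (B.map A.mkQ), f y ∈ W.map C.mkQ := by
    rintro ⟨y, hy⟩
    obtain ⟨x, hxB, rfl⟩ := hy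
    have : C.mkQ x ∈ (C ⊔ W).map C.mkQ := ⟨x, h hxB, rfl⟩
    rwa [Submodule.map_sup, map_mkQ_self_eq_bot, bot_sup_eq] at this
  have hinj : Function.Injective (f.codRestrict (W.map C.mkQ) hrange) := by
    rw [← LinearMap.ker_eq_bot, eq_bot_iff]
    rintro ⟨y, hy⟩ hker
    obtain ⟨x, hxB, rfl⟩ := hy
    have h1 : φ (A.mkQ x) = 0 := congrArg Subtype.val hker
    rw [hφ x] at h1
    have hxC : x ∈ C := by rwa [Submodule.mkQ_apply, Submodule.Quotient.mk_eq_zero] at h1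
    have : A.mkQ x = 0 := by
      rw [Submodule.mkQ_apply, Submodule.Quotient.mk_eq_zero]
      exact ⟨hxB, hxC⟩
    exact Submodule.mem_bot ℂ |>.mpr (Subtype.ext (by simpa using this))
  have : FiniteDimensional ℂ (W.map C.mkQ) := Module.Finite.map _ _
  exact FiniteDimensional.of_injective (f.codRestrict (W.map C.mkQ) hrange) hinj

lemma qdim_add {A B C : Submodule ℂ (KK p)} (hAB : A ≤ B) (hBC : B ≤ C)
    (hfin : FiniteDimensional ℂ (C.map A.mkQ)) :
    qdim A C = qdim A B + qdim B C := by
  let φ : (KK p ⧸ A) →ₗ[ℂ] (KK p ⧸ B) := A.mapQ B LinearMap.id hAB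
  have hφ : ∀ x : KK p, φ (A.mkQ x) = B.mkQ x := fun x => rfl
  let f : (C.map A.mkQ) →ₗ[ℂ] (KK p ⧸ B) := φ.comp (C.map A.mkQ).subtype
  have hrange : LinearMap.range f = C.map B.mkQ := by
    apply le_antisymm
    · rintro y ⟨⟨z, hz⟩, rfl⟩
      obtain ⟨x, hxC, rfl⟩ := hz
      exact ⟨x, hxC, (hφ x).symm⟩
    · rintro y ⟨x, hxC, rfl⟩
      exact ⟨⟨A.mkQ x, ⟨x, hxC, rfl⟩⟩, hφ x⟩
  have hker : LinearMap.ker f = (B.map A.mkQ).comap (C.map A.mkQ).subtype := by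
    ext ⟨y, hy⟩
    obtain ⟨x, hxC, rfl⟩ := hy
    simp only [LinearMap.mem_ker, Submodule.mem_comap, Submodule.coe_subtype]
    constructor
    · intro h0
      have : B.mkQ x = 0 := by rw [← hφ]; exact h0
      have hxB : x ∈ B := by rwa [Submodule.mkQ_apply, Submodule.Quotient.mk_eq_zero] at this
      exact ⟨x, hxB, rfl⟩
    · rintro ⟨x', hx'B, hx'⟩
      have hxB : x ∈ B := by
        have : x - x' ∈ A := by
          rw [← Submodule.Quotient.eq]
          exact hx'.symm
        have := hAB this
        have : x' + (x - x') ∈ B := B.add_mem hx'B this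
        simpa using this
      show f ⟨A.mkQ x, _⟩ = 0
      have : B.mkQ x = 0 := by rwa [Submodule.mkQ_apply, Submodule.Quotient.mk_eq_zero]
      exact (hφ x).trans this
  have hmain := LinearMap.finrank_range_add_finrank_ker f
  have hkerdim : Module.finrank ℂ (LinearMap.ker f)
      = Module.finrank ℂ (B.map A.mkQ) := by
    rw [hker]
    exact LinearEquiv.finrank_eq
      (Submodule.comapSubtypeEquivOfLe (Submodule.map_mono hBC))
  rw [hrange] at hmain
  have h3 : qdim A C = Module.finrank ℂ (C.map A.mkQ) := rfl
  have h4 : qdim A B = Module.finrank ℂ (B.map A.mkQ) := rfl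
  have h5 : qdim B C = Module.finrank ℂ (C.map B.mkQ) := rfl
  omega

lemma qdim_eq_zero_of_le {A B : Submodule ℂ (KK p)} (h : B ≤ A) : qdim A B = 0 := by
  have : B.map A.mkQ = ⊥ := by
    rw [eq_bot_iff]
    rintro y ⟨x, hx, rfl⟩
    simpa [Submodule.mkQ_apply, Submodule.Quotient.mk_eq_zero] using h hx
  rw [qdim, this]
  exact finrank_bot ℂ _

lemma qdim_eq_one {A B : Submodule ℂ (KK p)} {x : KK p} (hAB : A ≤ B) (hxB : x ∈ B)
    (hBA : B ≤ A ⊔ Submodule.span ℂ {x}) (hx : x ∉ A) : qdim A B = 1 := by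
  have hBeq : B = A ⊔ Submodule.span ℂ {x} :=
    le_antisymm hBA (sup_le hAB ((Submodule.span_singleton_le_iff_mem x B).mpr hxB))
  rw [qdim, hBeq, Submodule.map_sup, map_mkQ_self_eq_bot, bot_sup_eq, Submodule.map_span,
    Set.image_singleton]
  apply finrank_span_singleton
  rw [Ne, Submodule.mkQ_apply, Submodule.Quotient.mk_eq_zero]
  exact hx

end Part2
section Part3
variable {p : ℕ}

/-- `w + e i` -/
def upd (w : Fin p → ℤ) (i : Fin p) : Fin p → ℤ := fun j => if j = i then w j + 1 else w j

lemma le_upd (w : Fin p → ℤ) (i : Fin p) : w ≤ upd w i := by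
  intro j
  simp only [upd]
  split <;> omega

lemma mem_stdMod_upd {w : Fin p → ℤ} {i : Fin p} {x : KK p} :
    x ∈ stdMod p (upd w i) ↔ x ∈ stdMod p w ∧ (x i).coeff (w i) = 0 := by
  constructor
  · intro h
    refine ⟨stdMod_antitone (le_upd w i) h, h i (w i) (by rw [upd, if_pos rfl]; omega)⟩
  · rintro ⟨h1, h2⟩ k j hj
    rw [upd] at hj
    by_cases hk : k = i
    · subst hk
      rw [if_pos rfl] at hj
      rcases lt_or_eq_of_le (by omega : j ≤ w k) with h | h
      · exact h1 k j h
      · rwa [h]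
    · rw [if_neg hk] at hj
      exact h1 k j hj

/-- the key property: some element of `M` with values `≥ w` has a nonzero
coefficient in degree `w i` on the `i`-th branch -/
def PP (M : Submodule ℂ (KK p)) (w : Fin p → ℤ) (i : Fin p) : Prop :=
  ∃ g ∈ M ⊓ stdMod p w, (g i).coeff (w i) ≠ 0

lemma step_inf (M : Submodule ℂ (KK p)) (w : Fin p → ℤ) (i : Fin p) :
    qdim (M ⊓ stdMod p (upd w i)) (M ⊓ stdMod p w) = if PP M w i then 1 else 0 := by
  split
  · rename_i hP
    obtain ⟨g0, hg0, hc0⟩ := hP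
    refine qdim_eq_one (x := g0)
      (inf_le_inf_left M (stdMod_antitone (le_upd w i))) hg0 ?_ ?_
    · intro x hx
      set c : ℂ := (x i).coeff (w i) / (g0 i).coeff (w i) with hc
      refine Submodule.mem_sup.mpr ⟨x - c • g0, ?_, c • g0,
        Submodule.smul_mem _ _ (Submodule.mem_span_singleton_self g0), by ring⟩
      refine ⟨M.sub_mem hx.1 (M.smul_mem c hg0.1), mem_stdMod_upd.mpr ⟨?_, ?_⟩⟩
      · exact (stdMod p w).sub_mem hx.2 ((stdMod p w).smul_mem c hg0.2)
      · rw [Pi.sub_apply, HahnSeries.coeff_sub, Pi.smul_apply, HahnSeries.coeff_smul,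
          smul_eq_mul, hc, div_mul_cancel₀ _ hc0, sub_self]
    · rintro ⟨-, hmem⟩
      exact hc0 (mem_stdMod_upd.mp hmem).2
  · rename_i hP
    refine qdim_eq_zero_of_le fun x hx => ⟨hx.1, mem_stdMod_upd.mpr ⟨hx.2, ?_⟩⟩
    by_contra hc
    exact hP ⟨x, hx, hc⟩

lemma step_sup (M : Submodule ℂ (KK p)) (w : Fin p → ℤ) (i : Fin p) :
    qdim (M ⊔ stdMod p (upd w i)) (M ⊔ stdMod p w) = if PP M w i then 0 else 1 := by
  have hEmem : EE i (w i) ∈ stdMod p w := EE_mem_stdMod (le_refl _)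
  have hEi : (EE i (w i)) i = HahnSeries.single (w i) (1:ℂ) := by
    rw [EE_apply, if_pos rfl]
  have hEcoeff : ((EE i (w i)) i).coeff (w i) = 1 := by
    rw [hEi, HahnSeries.coeff_single, if_pos rfl]
  have hsub : ∀ x ∈ stdMod p w, x - (x i).coeff (w i) • EE i (w i) ∈ stdMod p (upd w i) := by
    intro x hx
    refine mem_stdMod_upd.mpr ⟨(stdMod p w).sub_mem hx ((stdMod p w).smul_mem _ hEmem), ?_⟩
    rw [Pi.sub_apply, HahnSeries.coeff_sub, Pi.smul_apply, HahnSeries.coeff_smul, hEcoeff,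
      smul_eq_mul, mul_one, sub_self]
  have hdecomp : M ⊔ stdMod p w ≤ (M ⊔ stdMod p (upd w i)) ⊔
      Submodule.span ℂ {EE i (w i)} := by
    refine sup_le (le_trans le_sup_left le_sup_left) fun x hx => ?_
    refine Submodule.mem_sup.mpr ⟨x - (x i).coeff (w i) • EE i (w i),
      Submodule.mem_sup_right (hsub x hx), (x i).coeff (w i) • EE i (w i),
      Submodule.smul_mem _ _ (Submodule.mem_span_singleton_self _), by ring⟩
  split
  · rename_i hP
    obtain ⟨g0, hg0, hc0⟩ := hP
    refine qdim_eq_zero_of_le ?_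
    have hEmem' : EE i (w i) ∈ M ⊔ stdMod p (upd w i) := by
      set u : KK p := ((g0 i).coeff (w i))⁻¹ • g0 with hu
      have huM : u ∈ M := M.smul_mem _ hg0.1
      have huc : (u i).coeff (w i) = 1 := by
        rw [hu, Pi.smul_apply, HahnSeries.coeff_smul, smul_eq_mul, inv_mul_cancel₀ hc0]
      have husub : u - EE i (w i) ∈ stdMod p (upd w i) := by
        refine mem_stdMod_upd.mpr ⟨(stdMod p w).sub_mem
          ((stdMod p w).smul_mem _ hg0.2) hEmem, ?_⟩
        rw [Pi.sub_apply, HahnSeries.coeff_sub, huc, hEcoeff, sub_self]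
      have : EE i (w i) = u - (u - EE i (w i)) := by ring
      rw [this]
      exact Submodule.sub_mem _ (Submodule.mem_sup_left huM)
        (Submodule.mem_sup_right husub)
    refine le_trans hdecomp (sup_le (le_refl _) ?_)
    rwa [Submodule.span_singleton_le_iff_mem]
  · rename_i hP
    refine qdim_eq_one (x := EE i (w i))
      (sup_le_sup_left (stdMod_antitone (le_upd w i)) M)
      (Submodule.mem_sup_right hEmem) hdecomp ?_
    intro hmem
    obtain ⟨y, hyM, z, hz, hyz⟩ := Submodule.mem_sup.mp hmem
    apply hP
    refine ⟨y, ⟨hyM, ?_⟩, ?_⟩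
    · have : y = EE i (w i) - z := by rw [← hyz]; ring
      rw [this]
      exact (stdMod p w).sub_mem hEmem (stdMod_antitone (le_upd w i) hz)
    · have hy : y = EE i (w i) - z := by rw [← hyz]; ring
      rw [hy, Pi.sub_apply, HahnSeries.coeff_sub, hEcoeff,
        (mem_stdMod_upd.mp hz).2, sub_zero]
      exact one_ne_zero
end Part3
section Part4
variable {p : ℕ} (O : Subalgebra ℂ (KK p))

lemma mem_dualMod {S : Set (KK p)} {h : KK p} :
    h ∈ dualMod O S ↔ ∀ g ∈ S, h * g ∈ O := Iff.rfl

lemma stdMod_conductor_le {γ : Fin p → ℕ}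
    (hγ : dualMod O (stdMod p 0 : Set (KK p)) = stdMod p (fun i => (γ i : ℤ))) :
    ∀ h ∈ stdMod p (fun i => (γ i : ℤ)), h ∈ O := by
  intro h hh
  rw [← hγ] at hh
  simpa using (mem_dualMod O).mp hh 1 one_mem_stdMod_zero

lemma mul_stdMod_sub_iff {γ : Fin p → ℕ}
    (hγ : dualMod O (stdMod p 0 : Set (KK p)) = stdMod p (fun i => (γ i : ℤ)))
    (w : Fin p → ℤ) (h : KK p) :
    (∀ g ∈ stdMod p w, h * g ∈ O) ↔ h ∈ stdMod p (fun i => (γ i : ℤ) - w i) := by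
  constructor
  · intro hd
    have h1 : h * TT w ∈ dualMod O (stdMod p 0 : Set (KK p)) := by
      rw [mem_dualMod]
      intro g hg
      have h2 : TT w * g ∈ stdMod p w := by
        have := mul_mem_stdMod (TT_mem w) hg
        rwa [add_zero] at this
      have := hd _ h2
      rwa [← mul_assoc] at this
    rw [hγ] at h1
    have h3 : h * TT w ∈ stdMod p ((fun i => (γ i : ℤ) - w i) + w) := by
      have he : ((fun i => (γ i : ℤ) - w i) + w) = (fun i => (γ i : ℤ)) := by
        funext i; simp
      rw [he]
      exact h1
    exact mul_TT_mem_iff.mp h3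
  · intro hh g hg
    apply stdMod_conductor_le O hγ
    have := mul_mem_stdMod hh hg
    have he : ((fun i => (γ i : ℤ) - w i) + w) = (fun i => (γ i : ℤ)) := by
      funext i; simp
    rwa [he] at this

lemma dual_inf_stdMod {γ : Fin p → ℕ}
    (hγ : dualMod O (stdMod p 0 : Set (KK p)) = stdMod p (fun i => (γ i : ℤ)))
    (I : Submodule ℂ (KK p)) (v : Fin p → ℤ) :
    dualMod O (I : Set (KK p)) ⊓ stdMod p v
      = dualMod O ((I ⊔ stdMod p (fun i => (γ i : ℤ) - v i) : Submodule ℂ (KK p)) :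
          Set (KK p)) := by
  ext h
  rw [Submodule.mem_inf, mem_dualMod, mem_dualMod]
  constructor
  · rintro ⟨h1, h2⟩ g hg
    obtain ⟨y, hy, z, hz, rfl⟩ := Submodule.mem_sup.mp hg
    rw [mul_add]
    refine O.add_mem (h1 y hy) ?_
    have he : (fun i => (γ i : ℤ) - ((γ i : ℤ) - v i)) = v := funext fun i => by ring
    exact ((mul_stdMod_sub_iff O hγ _ h).mpr (by rw [he]; exact h2)) z hz
  · intro hd
    refine ⟨fun g hg => hd g (Submodule.mem_sup_left hg), ?_⟩
    have h1 : ∀ g ∈ stdMod p (fun i => (γ i : ℤ) - v i), h * g ∈ O :=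
      fun g hg => hd g (Submodule.mem_sup_right hg)
    have h2 := (mul_stdMod_sub_iff O hγ _ h).mp h1
    have he : (fun i => (γ i : ℤ) - ((γ i : ℤ) - v i)) = v := by
      funext i; ring
    rwa [he] at h2

lemma order_ge_of_mem_stdMod {a : Fin p → ℤ} {x : KK p} (hx : x ∈ stdMod p a)
    {i : Fin p} (hxi : x i ≠ 0) : a i ≤ (x i).order := by
  by_contra hc
  exact (HahnSeries.coeff_order_eq_zero.not.mpr hxi) (hx i _ (by omega))

lemma mem_stdMod_of_order {a : Fin p → ℤ} {x : KK p}
    (hx : ∀ i, x i = 0 ∨ a i ≤ (x i).order) : x ∈ stdMod p a := by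
  intro i j hj
  rcases hx i with h | h
  · rw [h]; rfl
  · exact HahnSeries.coeff_eq_zero_of_lt_order (by omega)

/-- order vector of an element -/
def ovec (g : KK p) : Fin p → ℤ := fun i => if g i = 0 then 0 else (g i).order

lemma mem_stdMod_ovec (g : KK p) : g ∈ stdMod p (ovec g) :=
  mem_stdMod_of_order fun i => by
    simp only [ovec]
    by_cases h : g i = 0
    · exact Or.inl h
    · exact Or.inr (by rw [if_neg h])

/-- every fractional ideal is bounded below -/
lemma frac_le_stdMod {O : Subalgebra ℂ (KK p)} (hO : (O : Set (KK p)) ⊆ (stdMod p 0 : Set (KK p)))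
    {I : Submodule ℂ (KK p)} (hI : IsFracIdeal O I) :
    ∃ m : Fin p → ℤ, I ≤ stdMod p m := by
  obtain ⟨hstab, ⟨s, hsub, hgen⟩, g0, hg0I, hg0⟩ := hI
  rcases Finset.eq_empty_or_nonempty s with hemp | hs
  · refine ⟨0, fun x hx => ?_⟩
    obtain ⟨a, -, ha⟩ := hgen x hx
    rw [hemp, Finset.sum_empty] at ha
    rw [ha]
    exact (stdMod p 0).zero_mem
  refine ⟨fun i => s.inf' hs (fun g => ovec g i), fun x hx => ?_⟩
  obtain ⟨a, haO, ha⟩ := hgen x hx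
  rw [ha]
  refine Submodule.sum_mem _ fun g hg => ?_
  have h1 : a g * g ∈ stdMod p (0 + ovec g) :=
    mul_mem_stdMod (hO (haO g hg)) (mem_stdMod_ovec g)
  rw [zero_add] at h1
  exact stdMod_antitone (fun i => Finset.inf'_le _ hg) h1

/-- fractional ideals contain a standard module -/
lemma stdMod_le_frac {O : Subalgebra ℂ (KK p)}
    {γ : Fin p → ℕ}
    (hγ : dualMod O (stdMod p 0 : Set (KK p)) = stdMod p (fun i => (γ i : ℤ)))
    {I : Submodule ℂ (KK p)} (hI : IsFracIdeal O I) :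
    ∃ N : Fin p → ℤ, stdMod p N ≤ I := by
  obtain ⟨hstab, -, g0, hg0I, hg0⟩ := hI
  refine ⟨fun i => (g0 i).order + γ i, fun x hx => ?_⟩
  set y : KK p := fun i => x i * (g0 i)⁻¹ with hy
  have hxy : x = y * g0 := by
    funext i
    rw [hy, Pi.mul_apply, mul_assoc, inv_mul_cancel₀ (hg0 i), mul_one]
  have hyO : y ∈ O := by
    apply stdMod_conductor_le O hγ
    apply mem_stdMod_of_order
    intro i
    by_cases h : y i = 0
    · exact Or.inl h
    · right
      have hxi : x i ≠ 0 := fun h0 => h (by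
        show x i * (g0 i)⁻¹ = 0
        rw [h0, zero_mul])
      have horder : (g0 i).order + (γ i : ℤ) ≤ (x i).order :=
        order_ge_of_mem_stdMod hx hxi
      have hxo : (x i).order = (y i).order + (g0 i).order := by
        conv_lhs => rw [show x i = y i * g0 i from congrFun hxy i]
        exact HahnSeries.order_mul h (hg0 i)
      omega
  rw [hxy]
  exact hstab y hyO g0 hg0I

/-- duals of fractional ideals are bounded below -/
lemma dual_le_stdMod {O : Subalgebra ℂ (KK p)}
    (hO : (O : Set (KK p)) ⊆ (stdMod p 0 : Set (KK p)))
    {I : Submodule ℂ (KK p)} (hI : IsFracIdeal O I) :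
    ∃ m : Fin p → ℤ, dualMod O (I : Set (KK p)) ≤ stdMod p m := by
  obtain ⟨-, -, g0, hg0I, hg0⟩ := hI
  refine ⟨fun i => -(g0 i).order, fun h hd => ?_⟩
  apply mem_stdMod_of_order
  intro i
  by_cases hhi : h i = 0
  · exact Or.inl hhi
  · right
    have h1 : h * g0 ∈ stdMod p 0 := hO ((mem_dualMod O).mp hd g0 hg0I)
    have h2 : (h i * g0 i) ≠ 0 := mul_ne_zero hhi (hg0 i)
    have h3 : (0:ℤ) ≤ (h i * g0 i).order := by
      have := order_ge_of_mem_stdMod h1 (i := i) (by rwa [Pi.mul_apply])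
      simpa using this
    rw [HahnSeries.order_mul hhi (hg0 i)] at h3
    omega

end Part4
section Part5
variable {p : ℕ}

lemma repr_union (O : Subalgebra ℂ (KK p)) {s1 s2 : Finset (KK p)} {x1 x2 : KK p}
    (h1 : ∃ a : KK p → KK p, (∀ g ∈ s1, a g ∈ O) ∧ x1 = ∑ g ∈ s1, a g * g)
    (h2 : ∃ a : KK p → KK p, (∀ g ∈ s2, a g ∈ O) ∧ x2 = ∑ g ∈ s2, a g * g) :
    ∃ a : KK p → KK p, (∀ g ∈ s1 ∪ s2, a g ∈ O) ∧ x1 + x2 = ∑ g ∈ s1 ∪ s2, a g * g := by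
  classical
  obtain ⟨a1, ha1, hx1⟩ := h1
  obtain ⟨a2, ha2, hx2⟩ := h2
  refine ⟨fun g => (if g ∈ s1 then a1 g else 0) + (if g ∈ s2 then a2 g else 0), ?_, ?_⟩
  · intro g _
    refine O.add_mem ?_ ?_
    · split
      · exact ha1 g ‹_›
      · exact O.zero_mem
    · split
      · exact ha2 g ‹_›
      · exact O.zero_mem
  · have e1 : ∑ g ∈ s1 ∪ s2, (if g ∈ s1 then a1 g else 0) * g = x1 := by
      rw [← Finset.sum_subset Finset.subset_union_left
        (fun g _ hns => by rw [if_neg hns, zero_mul])]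
      rw [hx1]
      exact Finset.sum_congr rfl fun g hg => by rw [if_pos hg]
    have e2 : ∑ g ∈ s1 ∪ s2, (if g ∈ s2 then a2 g else 0) * g = x2 := by
      rw [← Finset.sum_subset Finset.subset_union_right
        (fun g _ hns => by rw [if_neg hns, zero_mul])]
      rw [hx2]
      exact Finset.sum_congr rfl fun g hg => by rw [if_pos hg]
    calc x1 + x2 = ∑ g ∈ s1 ∪ s2, ((if g ∈ s1 then a1 g else 0) * g)
          + ∑ g ∈ s1 ∪ s2, ((if g ∈ s2 then a2 g else 0) * g) := by rw [e1, e2]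
      _ = ∑ g ∈ s1 ∪ s2, ((if g ∈ s1 then a1 g else 0) + (if g ∈ s2 then a2 g else 0)) * g := by
          rw [← Finset.sum_add_distrib]
          exact Finset.sum_congr rfl fun g _ => by ring

lemma repr_span (O : Subalgebra ℂ (KK p)) (s : Finset (KK p)) {x : KK p}
    (hx : x ∈ Submodule.span ℂ (↑s : Set (KK p))) :
    ∃ a : KK p → KK p, (∀ g ∈ s, a g ∈ O) ∧ x = ∑ g ∈ s, a g * g := by
  obtain ⟨f, -, hf⟩ := Submodule.mem_span_finset.mp hx
  refine ⟨fun g => algebraMap ℂ (KK p) (f g), fun g _ => O.algebraMap_mem _, ?_⟩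
  rw [← hf]
  exact Finset.sum_congr rfl fun g _ => (smul_eq_algebraMap_mul (f g) g)

lemma genF_mem_stdMod {a b : Fin p → ℤ} : ∀ g ∈ genF a b, g ∈ stdMod p a := by
  intro g hg
  rw [genF, Finset.mem_biUnion] at hg
  obtain ⟨i, -, hi⟩ := hg
  rw [Finset.mem_image] at hi
  obtain ⟨j, hj, rfl⟩ := hi
  exact EE_mem_stdMod (Finset.mem_Ico.mp hj).1

lemma frac_sup (O : Subalgebra ℂ (KK p))
    (hO : (O : Set (KK p)) ⊆ (stdMod p 0 : Set (KK p))) {γ : Fin p → ℕ}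
    (hγ : dualMod O (stdMod p 0 : Set (KK p)) = stdMod p (fun i => (γ i : ℤ)))
    {I : Submodule ℂ (KK p)} (hI : IsFracIdeal O I) (w : Fin p → ℤ) :
    IsFracIdeal O (I ⊔ stdMod p w) := by
  classical
  obtain ⟨hstab, ⟨sI, hsub, hgen⟩, g0, hg0I, hg0⟩ := hI
  refine ⟨?_, ?_, g0, Submodule.mem_sup_left hg0I, hg0⟩
  · intro aa haO x hx
    obtain ⟨y, hy, z, hz, rfl⟩ := Submodule.mem_sup.mp hx
    rw [mul_add]
    refine Submodule.add_mem _ (Submodule.mem_sup_left (hstab aa haO y hy))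
      (Submodule.mem_sup_right ?_)
    have := mul_mem_stdMod (hO haO) hz
    rwa [zero_add] at this
  · refine ⟨sI ∪ (genF w (fun i => w i + γ i) ∪ {TT w}), ?_, ?_⟩
    · intro g hg
      rcases Finset.mem_union.mp (by exact_mod_cast hg) with h | h
      · exact Submodule.mem_sup_left (hsub h)
      · rcases Finset.mem_union.mp h with h | h
        · exact Submodule.mem_sup_right
            (stdMod_antitone (fun i => le_refl _) (genF_mem_stdMod g h))
        · rw [Finset.mem_singleton] at h
          rw [h]
          exact Submodule.mem_sup_right (TT_mem w)
    · intro x hx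
      obtain ⟨y, hy, z, hz, rfl⟩ := Submodule.mem_sup.mp hx
      have hun1 : ∃ a : KK p → KK p,
          (∀ g ∈ genF w (fun i => w i + γ i), a g ∈ O) ∧
          z - truncV (fun i => w i + γ i) z
            = ∑ g ∈ genF w (fun i => w i + γ i), a g * g := by
        refine repr_span O _ ?_
        refine mem_Wfin_of_coeff fun i j hj => ?_
        rw [sub_truncV_coeff] at hj
        by_cases h : w i + γ i ≤ j
        · rw [if_pos h] at hj; exact absurd rfl hj
        · rw [if_neg h] at hj
          have : ¬ j < w i := fun hlt => hj (hz i j hlt)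
          exact ⟨by omega, by omega⟩
      have hun2 : ∃ a : KK p → KK p,
          (∀ g ∈ ({TT w} : Finset (KK p)), a g ∈ O) ∧
          truncV (fun i => w i + γ i) z = ∑ g ∈ ({TT w} : Finset (KK p)), a g * g := by
        set a3 : KK p := truncV (fun i => w i + γ i) z * TT (fun i => -(w i)) with ha3
        have hkey : a3 * TT w = truncV (fun i => w i + γ i) z := by
          rw [ha3, mul_assoc, TT_mul_TT]
          have : ((fun i => -(w i)) + w) = (0 : Fin p → ℤ) := by funext i; simp
          rw [this, TT_zero, mul_one]
        have ha3O : a3 ∈ O := by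
          apply stdMod_conductor_le O hγ
          apply mul_TT_mem_iff.mp
          rw [hkey]
          have : ((fun i => (γ i : ℤ)) + w) = (fun i => w i + γ i) := by
            funext i; simp [add_comm]
          rw [this]
          exact truncV_mem _ z
        exact ⟨fun _ => a3, fun g _ => ha3O, by rw [Finset.sum_singleton, hkey]⟩
      have hz_eq : z = (z - truncV (fun i => w i + γ i) z)
          + truncV (fun i => w i + γ i) z := by ring
      obtain ⟨a, ha, hrep⟩ := repr_union O (hgen y hy) (repr_union O hun1 hun2)
      exact ⟨a, ha, by rw [← hrep, ← hz_eq]⟩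

end Part5
section Part6
variable {p : ℕ}

lemma grid_lemma (NN : (Fin p → ℤ) → ℤ)
    (hstep : ∀ w i, NN (upd w i) = NN w + 1) (w0 : Fin p → ℤ) :
    ∀ (n : ℕ) (a : Fin p → ℕ), (∑ i, a i) = n →
      NN (fun j => w0 j + a j) = NN w0 + ∑ i, (a i : ℤ) := by
  intro n
  induction n with
  | zero =>
    intro a ha
    have h0 : ∀ i, a i = 0 := fun i =>
      Finset.sum_eq_zero_iff.mp ha i (Finset.mem_univ i)
    have h1 : (fun j => w0 j + (a j : ℤ)) = w0 := funext fun j => by rw [h0 j]; simp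
    rw [h1]
    have h2 : ∑ i, ((a i : ℤ)) = 0 := Finset.sum_eq_zero fun i _ => by rw [h0 i]; simp
    rw [h2, add_zero]
  | succ n ih =>
    intro a ha
    have hex : ∃ i, a i ≠ 0 := by
      by_contra h
      push_neg at h
      rw [Finset.sum_congr rfl fun i _ => h i, Finset.sum_const, smul_eq_mul, mul_zero] at ha
      exact Nat.succ_ne_zero n ha.symm
    obtain ⟨i, hi⟩ := hex
    classical
    set a' : Fin p → ℕ := Function.update a i (a i - 1) with ha'
    have hsum' : ∑ j, a' j = n := by
      rw [ha', Finset.sum_update_of_mem (Finset.mem_univ i)]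
      have := Finset.sum_eq_sum_sdiff_singleton_add (Finset.mem_univ i) a
      omega
    have harg : (fun j => w0 j + (a j : ℤ)) = upd (fun j => w0 j + (a' j : ℤ)) i := by
      funext j
      simp only [upd, ha', Function.update_apply]
      by_cases hj : j = i
      · rw [if_pos hj, if_pos hj, hj]
        have : (a i : ℤ) - 1 = ((a i - 1 : ℕ) : ℤ) := by omega
        omega
      · rw [if_neg hj, if_neg hj]
    have hcast : ∑ j, ((a' j : ℤ)) = (n : ℤ) := by rw [← Nat.cast_sum, hsum']
    have hcast2 : ∑ j, ((a j : ℤ)) = ((n : ℤ) + 1) := by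
      rw [← Nat.cast_sum, ha]; push_cast; ring
    rw [harg, hstep, ih a' hsum', hcast, hcast2]
    ring

lemma neg_one_pow_sub {k P : ℕ} (h : k ≤ P) : (-1:ℤ)^(P - k) = (-1)^P * (-1)^k := by
  have h1 : (-1:ℤ)^(P-k) * (-1)^k = (-1)^P := by
    rw [← pow_add]
    congr 1
    omega
  have h2 : ((-1:ℤ)^k) * ((-1:ℤ)^k) = 1 := by
    rw [← mul_pow]
    simp
  calc (-1:ℤ)^(P-k) = (-1:ℤ)^(P-k) * ((-1:ℤ)^k * (-1:ℤ)^k) := by rw [h2, mul_one]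
    _ = (-1)^P * (-1)^k := by rw [← mul_assoc, h1]

lemma card_le_p (J : Finset (Fin p)) : J.card ≤ p := by
  have := Finset.card_le_univ J
  simpa using this

lemma sum_sign_zero (hP : 1 ≤ p) : ∑ J : Finset (Fin p), (-1:ℤ)^(p - J.card) = 0 := by
  rw [Finset.sum_congr rfl (fun J _ => neg_one_pow_sub (card_le_p J)), ← Finset.mul_sum]
  have h1 : ∑ J : Finset (Fin p), (-1:ℤ)^J.card = 0 := by
    have h2 := Finset.sum_powerset_neg_one_pow_card (x := (Finset.univ : Finset (Fin p)))
    rw [Finset.powerset_univ] at h2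
    rw [h2, if_neg (Finset.nonempty_iff_ne_empty.mp ⟨⟨0, hP⟩, Finset.mem_univ _⟩)]
  rw [h1, mul_zero]

lemma sum_compl_reindex (f : Finset (Fin p) → ℤ) :
    ∑ J : Finset (Fin p), f Jᶜ = ∑ J : Finset (Fin p), f J :=
  Fintype.sum_bijective compl (Function.Involutive.bijective fun J => compl_compl J) _ _
    (fun _ => rfl)

lemma card_compl_eq (J : Finset (Fin p)) : Jᶜ.card = p - J.card := by
  rw [Finset.card_compl]
  simp

lemma sum_ite_card (J : Finset (Fin p)) :
    ∑ i, ((if i ∈ J then 1 else 0 : ℕ) : ℤ) = J.card := by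
  rw [Finset.sum_congr rfl (fun i _ => by push_cast; ring_nf; rfl)]
  simp [Finset.sum_ite_mem]

lemma sum_ite_card2 (J : Finset (Fin p)) :
    ∑ i, ((if i ∈ J then 2 else 1 : ℕ) : ℤ) = p + J.card := by
  have : ∀ i, ((if i ∈ J then 2 else 1 : ℕ) : ℤ) = 1 + ((if i ∈ J then 1 else 0 : ℕ) : ℤ) := by
    intro i
    split <;> simp
  rw [Finset.sum_congr rfl fun i _ => this i, Finset.sum_add_distrib, sum_ite_card]
  simp [add_comm]

end Part6
section Part7
variable {p : ℕ}

lemma fdim_inf_mkQ {B : Submodule ℂ (KK p)} {m : Fin p → ℤ} (hB : B ≤ stdMod p m)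
    (v : Fin p → ℤ) : FiniteDimensional ℂ (B.map (B ⊓ stdMod p v).mkQ) := by
  refine fdim_map_mkQ rfl (W := Wfin m (fun i => max (m i) (v i))) ?_
  have h1 : stdMod p m ≤ stdMod p (fun i => max (m i) (v i))
      ⊔ Wfin m (fun i => max (m i) (v i)) :=
    stdMod_le_sup_Wfin _ _ (fun i => le_max_left _ _)
  have h2 : stdMod p (fun i => max (m i) (v i)) ≤ stdMod p v :=
    stdMod_antitone (fun i => le_max_right _ _)
  exact le_trans hB (le_trans h1 (sup_le_sup_right h2 _))

lemma fdim_sup_mkQ {I : Submodule ℂ (KK p)} {N : Fin p → ℤ} (hN : stdMod p N ≤ I)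
    (w : Fin p → ℤ) : FiniteDimensional ℂ ((I ⊔ stdMod p w).map I.mkQ) := by
  have hA : I = (I ⊔ stdMod p w) ⊓ I := (inf_eq_right.mpr le_sup_left).symm
  refine fdim_map_mkQ hA (W := Wfin w (fun i => max (w i) (N i))) ?_
  refine sup_le le_sup_left ?_
  have h1 : stdMod p w ≤ stdMod p (fun i => max (w i) (N i))
      ⊔ Wfin w (fun i => max (w i) (N i)) :=
    stdMod_le_sup_Wfin _ _ (fun i => le_max_left _ _)
  have h2 : stdMod p (fun i => max (w i) (N i)) ≤ stdMod p N :=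
    stdMod_antitone (fun i => le_max_right _ _)
  exact le_trans h1 (sup_le_sup_right (le_trans h2 hN) _)

/-- `ℓ(v+1) = c(v) + ℓ(v)` -/
lemma ell_c {B : Submodule ℂ (KK p)} {m : Fin p → ℤ} (hB : B ≤ stdMod p m)
    (u : Fin p → ℤ) :
    qdim (B ⊓ stdMod p (u + 1)) B = cI B u + qdim (B ⊓ stdMod p u) B := by
  have h := qdim_add (A := B ⊓ stdMod p (u + 1)) (B := B ⊓ stdMod p u) (C := B)
    (inf_le_inf_left B (stdMod_antitone (fun i => by simp)))
    inf_le_left (fdim_inf_mkQ hB (u + 1))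
  rw [h]
  rfl

/-- `ℓ(w + e i) = step + ℓ(w)` -/
lemma ell_step {B : Submodule ℂ (KK p)} {m : Fin p → ℤ} (hB : B ≤ stdMod p m)
    (w : Fin p → ℤ) (i : Fin p) :
    qdim (B ⊓ stdMod p (upd w i)) B
      = (if PP B w i then 1 else 0) + qdim (B ⊓ stdMod p w) B := by
  have h := qdim_add (A := B ⊓ stdMod p (upd w i)) (B := B ⊓ stdMod p w) (C := B)
    (inf_le_inf_left B (stdMod_antitone (le_upd w i)))
    inf_le_left (fdim_inf_mkQ hB (upd w i))
  rw [h, step_inf]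

/-- `m(w) = m(w + e i) + costep` -/
lemma em_step {I : Submodule ℂ (KK p)} {N : Fin p → ℤ} (hN : stdMod p N ≤ I)
    (w : Fin p → ℤ) (i : Fin p) :
    qdim I (I ⊔ stdMod p w)
      = qdim I (I ⊔ stdMod p (upd w i)) + (if PP I w i then 0 else 1) := by
  have h := qdim_add (A := I) (B := I ⊔ stdMod p (upd w i)) (C := I ⊔ stdMod p w)
    le_sup_left (sup_le_sup_left (stdMod_antitone (le_upd w i)) I)
    (fdim_sup_mkQ hN w)
  rw [h, step_sup]

end Part7

/-- **Functional equation of the Poincaré series**: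
`α_{I^∨}(v) = (−1)^{p+1}·α_I(γ − v)`. -/
theorem alphaI_dual {p : ℕ} (hp : 1 ≤ p) (O : Subalgebra ℂ (KK p))
    (hO : (O : Set (KK p)) ⊆ (stdMod p 0 : Set (KK p)))
    (γ : Fin p → ℕ)
    (hγ : dualMod O (stdMod p 0 : Set (KK p)) = stdMod p (fun i => (γ i : ℤ)))
    (hG1 : ∀ I : Submodule ℂ (KK p), IsFracIdeal O I →
      dualMod O ((dualMod O (I : Set (KK p)) : Submodule ℂ (KK p)) : Set (KK p)) = I)
    (hG2 : ∀ I J : Submodule ℂ (KK p), IsFracIdeal O I → IsFracIdeal O J → I ≤ J →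
      qdim I J = qdim (dualMod O (J : Set (KK p))) (dualMod O (I : Set (KK p))))
    (hG3 : DeltaSet (fun i => (γ i : ℤ) - 1) (vals (O : Set (KK p))) = ∅)
    (I : Submodule ℂ (KK p)) (hI : IsFracIdeal O I) (v : Fin p → ℤ) :
    alphaI (dualMod O (I : Set (KK p))) v =
      (-1 : ℤ) ^ (p + 1) * alphaI I (fun i => (γ i : ℤ) - v i) := by
  classical
  obtain ⟨mI, hmI⟩ := frac_le_stdMod hO hI
  obtain ⟨N, hN⟩ := stdMod_le_frac hγ hI
  obtain ⟨mD, hmD⟩ := dual_le_stdMod hO hI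
  -- the function L - M has constant slope 1 in each direction
  have hNNstep : ∀ (w : Fin p → ℤ) (i : Fin p),
      ((qdim (I ⊓ stdMod p (upd w i)) I : ℤ) - (qdim I (I ⊔ stdMod p (upd w i)) : ℤ))
        = ((qdim (I ⊓ stdMod p w) I : ℤ) - (qdim I (I ⊔ stdMod p w) : ℤ)) + 1 := by
    intro w i
    have h1 := ell_step hmI w i
    have h2 := em_step hN w i
    by_cases hP : PP I w i
    · rw [if_pos hP] at h1 h2; omega
    · rw [if_neg hP] at h1 h2; omega
  have hgrid := grid_lemma
    (fun w => (qdim (I ⊓ stdMod p w) I : ℤ) - (qdim I (I ⊔ stdMod p w) : ℤ))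
    hNNstep
  -- M in terms of L on the grid above w0 = γ - v - 1
  have hM : ∀ a : Fin p → ℕ,
      (qdim I (I ⊔ stdMod p (fun j => ((γ j : ℤ) - v j - 1) + (a j : ℤ))) : ℤ)
        = (qdim (I ⊓ stdMod p (fun j => ((γ j : ℤ) - v j - 1) + (a j : ℤ))) I : ℤ)
          - ((qdim (I ⊓ stdMod p (fun j => (γ j : ℤ) - v j - 1)) I : ℤ)
             - (qdim I (I ⊔ stdMod p (fun j => (γ j : ℤ) - v j - 1)) : ℤ))
          - ∑ i, (a i : ℤ) := by
    intro a
    have h := hgrid (fun j => (γ j : ℤ) - v j - 1) (∑ i, a i) a rfl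
    omega
  -- duality: the dual's L-function is the M-function
  have hLDM : ∀ v' : Fin p → ℤ,
      qdim (dualMod O (I : Set (KK p)) ⊓ stdMod p v') (dualMod O (I : Set (KK p)))
        = qdim I (I ⊔ stdMod p (fun i => (γ i : ℤ) - v' i)) := by
    intro v'
    have heq := dual_inf_stdMod O hγ I v'
    rw [heq]
    exact (hG2 I (I ⊔ stdMod p (fun i => (γ i : ℤ) - v' i)) hI
      (frac_sup O hO hγ hI _) le_sup_left).symm
  set XX : Finset (Fin p) → ℤ := fun K =>
    (qdim (I ⊓ stdMod p (fun j => ((γ j : ℤ) - v j - 1)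
      + ((if j ∈ K then 2 else 1 : ℕ) : ℤ))) I : ℤ) with hXX
  set YY : Finset (Fin p) → ℤ := fun K =>
    (qdim (I ⊓ stdMod p (fun j => ((γ j : ℤ) - v j - 1)
      + ((if j ∈ K then 1 else 0 : ℕ) : ℤ))) I : ℤ) with hYY
  -- the dual side c-values
  have hcD : ∀ J : Finset (Fin p),
      (cI (dualMod O (I : Set (KK p))) (fun j => v j - if j ∈ J then 1 else 0) : ℤ)
        = YY J - XX J + p := by
    intro J
    have h1 := ell_c hmD (fun j => v j - if j ∈ J then 1 else 0)
    have h2 := hLDM ((fun j => v j - if j ∈ J then 1 else 0) + 1)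
    have h3 := hLDM (fun j => v j - if j ∈ J then 1 else 0)
    have e2 : (fun i => (γ i : ℤ) - ((fun j => v j - if j ∈ J then 1 else 0) + 1) i)
        = (fun j => ((γ j : ℤ) - v j - 1) + ((if j ∈ J then 1 else 0 : ℕ) : ℤ)) := by
      funext j
      simp only [Pi.add_apply, Pi.one_apply]
      by_cases h : j ∈ J <;> simp only [h, if_true, if_false] <;> push_cast <;> ring
    have e3 : (fun i => (γ i : ℤ) - (fun j => v j - if j ∈ J then 1 else 0) i)
        = (fun j => ((γ j : ℤ) - v j - 1) + ((if j ∈ J then 2 else 1 : ℕ) : ℤ)) := by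
      funext j
      simp only []
      by_cases h : j ∈ J <;> simp only [h, if_true, if_false] <;> push_cast <;> ring
    rw [e2] at h2
    rw [e3] at h3
    have h4 := hM (fun j => if j ∈ J then 1 else 0)
    have h5 := hM (fun j => if j ∈ J then 2 else 1)
    rw [sum_ite_card J] at h4
    rw [sum_ite_card2 J] at h5
    rw [hXX, hYY]
    simp only []
    omega
  -- the primal side c-values
  have hcI : ∀ J : Finset (Fin p),
      (cI I (fun j => (γ j : ℤ) - v j - if j ∈ J then 1 else 0) : ℤ)
        = XX Jᶜ - YY Jᶜ := by
    intro J
    have h1 := ell_c hmI (fun j => (γ j : ℤ) - v j - if j ∈ J then 1 else 0)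
    have e2 : ((fun j => (γ j : ℤ) - v j - if j ∈ J then 1 else 0) + 1)
        = (fun j => ((γ j : ℤ) - v j - 1) + ((if j ∈ Jᶜ then 2 else 1 : ℕ) : ℤ)) := by
      funext j
      simp only [Pi.add_apply, Pi.one_apply, Finset.mem_compl]
      by_cases h : j ∈ J <;> simp only [h, if_true, if_false, not_true, not_false_iff]
        <;> push_cast <;> ring
    have e3 : (fun j => (γ j : ℤ) - v j - if j ∈ J then 1 else 0)
        = (fun j => ((γ j : ℤ) - v j - 1) + ((if j ∈ Jᶜ then 1 else 0 : ℕ) : ℤ)) := by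
      funext j
      simp only [Finset.mem_compl]
      by_cases h : j ∈ J <;> simp only [h, if_true, if_false, not_true, not_false_iff]
        <;> push_cast <;> ring
    have q1 : qdim (I ⊓ stdMod p
          ((fun j => (γ j : ℤ) - v j - if j ∈ J then 1 else 0) + 1)) I
        = qdim (I ⊓ stdMod p (fun j => ((γ j : ℤ) - v j - 1)
            + ((if j ∈ Jᶜ then 2 else 1 : ℕ) : ℤ))) I := by rw [e2]
    have q2 : qdim (I ⊓ stdMod p
          (fun j => (γ j : ℤ) - v j - if j ∈ J then 1 else 0)) I
        = qdim (I ⊓ stdMod p (fun j => ((γ j : ℤ) - v j - 1)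
            + ((if j ∈ Jᶜ then 1 else 0 : ℕ) : ℤ))) I := by rw [e3]
    rw [hXX, hYY]
    simp only []
    omega
  -- assembly
  rw [alphaI, alphaI, Finset.mul_sum]
  have lhs_eq : ∀ J : Finset (Fin p),
      (-1:ℤ)^(p - J.card)
          * (cI (dualMod O (I : Set (KK p))) (fun j => v j - if j ∈ J then 1 else 0) : ℤ)
        = (-1:ℤ)^(p - J.card) * (YY J - XX J) + (-1:ℤ)^(p - J.card) * p := by
    intro J
    rw [hcD J]
    ring
  rw [Finset.sum_congr rfl (fun J _ => lhs_eq J), Finset.sum_add_distrib,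
    ← Finset.sum_mul, sum_sign_zero hp, zero_mul, add_zero]
  have rhs_eq : ∀ J : Finset (Fin p),
      (-1:ℤ)^(p+1) * ((-1:ℤ)^(p - J.card)
          * (cI I (fun j => (γ j : ℤ) - v j - if j ∈ J then 1 else 0) : ℤ))
        = (fun K : Finset (Fin p) =>
            (-1:ℤ)^(p+1) * ((-1:ℤ)^(p - Kᶜ.card) * (XX K - YY K))) Jᶜ := by
    intro J
    simp only [compl_compl]
    rw [hcI J]
  rw [Finset.sum_congr rfl (fun J _ => rhs_eq J),
    sum_compl_reindex (fun K => (-1:ℤ)^(p+1) * ((-1:ℤ)^(p - Kᶜ.card) * (XX K - YY K)))]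
  refine (Finset.sum_congr rfl fun J _ => ?_).symm
  rw [card_compl_eq]
  have hc : p - (p - J.card) = J.card := by
    have := card_le_p J
    omega
  rw [hc, neg_one_pow_sub (card_le_p J), pow_succ]
  ring
end
end

section
/- (Values of zero divisors.) Let I be a fractional ideal of O and ν ∈ ℤ^p with t^ν·O~ ⊆ I. Let w ∈ (ℤ∪{∞})^p be such that the set S = {j : w_j = ∞} is nonempty. Then w ∈ valbar(I) if and only if the vector v ∈ ℤ^p defined by v_j = ν_j for j ∈ S and v_j = min(w_j, ν_j) for j ∉ S belongs to val(I). In particular, the set val(I) of values of non-zerodivisors determines the set valbar(I) of values of all elements of I. -/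
open scoped Classical

set_option synthInstance.maxHeartbeats 1000000
set_option maxHeartbeats 1000000

noncomputable section

lemma valC_eq_coe_of (g : LaurentSeries ℂ) (n : ℤ)
    (h0 : ∀ j < n, g.coeff j = 0) (hn : g.coeff n ≠ 0) : valC g = (n : WithTop ℤ) := by
  have hg : g ≠ 0 := fun h => hn (by simp [h])
  rw [valC, if_neg hg]
  norm_cast
  refine le_antisymm (HahnSeries.order_le_of_coeff_ne_zero hn) ?_
  by_contra hlt
  exact (mt HahnSeries.coeff_order_eq_zero.mp hg) (h0 _ (lt_of_not_ge hlt))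

lemma valC_single (n : ℤ) (c : ℂ) (hc : c ≠ 0) :
    valC (HahnSeries.single n c) = (n : WithTop ℤ) := by
  rw [valC, if_neg (HahnSeries.single_ne_zero hc), HahnSeries.order_single hc]

lemma valC_eq_top_iff (g : LaurentSeries ℂ) : valC g = ⊤ ↔ g = 0 := by
  rw [valC]; split <;> simp_all

lemma of_valC_eq_coe (g : LaurentSeries ℂ) (n : ℤ) (h : valC g = (n : WithTop ℤ)) :
    (∀ j < n, g.coeff j = 0) ∧ g.coeff n ≠ 0 := by
  have hg : g ≠ 0 := by
    intro h0; rw [valC, if_pos h0] at h; exact (WithTop.coe_ne_top h.symm)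
  rw [valC, if_neg hg] at h
  have : g.order = n := by exact_mod_cast h
  exact ⟨fun j hj => HahnSeries.coeff_eq_zero_of_lt_order (this ▸ hj),
    this ▸ (mt HahnSeries.coeff_order_eq_zero.mp hg)⟩

/-- **Values of zero divisors**: for `w` with at least one infinite coordinate,
`w ∈ valbar(I)` iff the vector obtained by replacing infinite coordinates by
`ν_j` and the others by `min(w_j, ν_j)` lies in `val(I)`.  In particular
`val(I)` determines `valbar(I)`. -/
theorem valsBar_mem_iff {p : ℕ} (hp : 1 ≤ p) (O : Subalgebra ℂ (KK p))
    (hO : (O : Set (KK p)) ⊆ (stdMod p 0 : Set (KK p)))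
    (I : Submodule ℂ (KK p)) (hI : IsFracIdeal O I)
    (ν : Fin p → ℤ) (hν : (stdMod p ν : Set (KK p)) ⊆ (I : Set (KK p)))
    (w : Fin p → WithTop ℤ) (hS : ∃ j, w j = ⊤) :
    w ∈ valsBar (I : Set (KK p)) ↔
      (fun j => min ((w j).untopD (ν j)) (ν j)) ∈ vals (I : Set (KK p)) := by
  constructor
  · rintro ⟨g, hgI, hgv⟩
    set c : Fin p → ℂ := fun j => if (g j).coeff (ν j) = -1 then 2 else 1 with hc
    have hc0 : ∀ j, c j ≠ 0 := by intro j; simp only [hc]; split <;> norm_num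
    have hcne : ∀ j, c j ≠ -(g j).coeff (ν j) := by
      intro j; simp only [hc]; split
      · rename_i h; rw [h]; intro h1; norm_num at h1
      · rename_i h; intro h1
        exact h (by linear_combination h1)
    set x : KK p := fun j => HahnSeries.single (ν j) (c j) with hxdef
    have hx : x ∈ stdMod p ν := by
      intro i j hj
      simp only [hxdef, HahnSeries.coeff_single, if_neg hj.ne]
    refine ⟨g + x, I.add_mem hgI (hν hx), fun i => ?_⟩
    simp only [Pi.add_apply]
    rcases eq_or_ne (w i) ⊤ with hw | hw
    · have hg0 : g i = 0 := (valC_eq_top_iff _).mp (by rw [hgv i, hw])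
      rw [hg0, zero_add, hw]
      simp only [WithTop.untopD_top, min_self, hxdef]
      exact valC_single _ _ (hc0 i)
    · obtain ⟨m, hm⟩ := WithTop.ne_top_iff_exists.mp hw
      have hgm : valC (g i) = (m : WithTop ℤ) := by rw [hgv i, ← hm]
      obtain ⟨h0, hn⟩ := of_valC_eq_coe _ _ hgm
      have hmin : (w i).untopD (ν i) = m := by rw [← hm]; rfl
      rw [hmin]
      rcases lt_trichotomy m (ν i) with hlt | heq | hgt
      · rw [min_eq_left hlt.le]
        apply valC_eq_coe_of
        · intro j hj
          simp only [HahnSeries.coeff_add, h0 j hj, hxdef,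
            HahnSeries.coeff_single, if_neg (hj.trans hlt).ne, add_zero]
        · simpa only [HahnSeries.coeff_add, hxdef, HahnSeries.coeff_single,
            if_neg hlt.ne, add_zero] using hn
      · rw [heq, min_self]
        apply valC_eq_coe_of
        · intro j hj
          simp only [HahnSeries.coeff_add, h0 j (heq ▸ hj), hxdef,
            HahnSeries.coeff_single, if_neg hj.ne, add_zero]
        · subst heq
          simp only [HahnSeries.coeff_add, hxdef, HahnSeries.coeff_single, if_pos rfl, if_true,
            eq_self_iff_true, ite_true]
          intro hcon
          exact hcne i (eq_neg_of_add_eq_zero_right hcon)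
      · rw [min_eq_right hgt.le]
        apply valC_eq_coe_of
        · intro j hj
          simp only [HahnSeries.coeff_add, h0 j (hj.trans hgt), hxdef,
            HahnSeries.coeff_single, if_neg hj.ne, add_zero]
        · simp only [HahnSeries.coeff_add, h0 _ hgt, hxdef,
            HahnSeries.coeff_single, if_pos rfl, zero_add]
          exact hc0 i
  · rintro ⟨h, hhI, hhv⟩
    have hhv' : ∀ i, valC (h i) = ((min ((w i).untopD (ν i)) (ν i) : ℤ) : WithTop ℤ) :=
      fun i => hhv i
    set x : KK p := fun j =>
      if w j = ⊤ then h j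
      else if ν j ≤ (w j).untopD (ν j) then
        h j - HahnSeries.single ((w j).untopD (ν j)) 1 else 0 with hxdef
    have hx : x ∈ stdMod p ν := by
      intro i j hj
      obtain ⟨hlo, -⟩ := of_valC_eq_coe _ _ (hhv' i)
      simp only [hxdef]
      split
      · rename_i hw
        apply hlo
        simp [hw, hj]
      · split
        · rename_i hw hle
          rw [HahnSeries.coeff_sub, hlo j (lt_min (hj.trans_le hle) hj),
            HahnSeries.coeff_single, if_neg (hj.trans_le hle).ne, sub_zero]
        · simp
    refine ⟨h - x, I.sub_mem hhI (hν hx), fun i => ?_⟩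
    simp only [Pi.sub_apply]
    rcases eq_or_ne (w i) ⊤ with hw | hw
    · have hxi : h i - x i = 0 := by simp [hxdef, hw]
      rw [hxi, hw]
      exact (valC_eq_top_iff 0).mpr rfl
    · obtain ⟨m, hm⟩ := WithTop.ne_top_iff_exists.mp hw
      have hmin : (w i).untopD (ν i) = m := by rw [← hm]; rfl
      rcases le_or_gt (ν i) m with hle | hlt
      · have : x i = h i - HahnSeries.single m 1 := by
          rw [hxdef]; simp only [if_neg hw, hmin, if_pos hle]
        rw [this, sub_sub_cancel, ← hm]
        exact valC_single m 1 one_ne_zero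
      · have : x i = 0 := by
          rw [hxdef]; simp only [if_neg hw, hmin, if_neg (not_le.mpr hlt)]
        rw [this, sub_zero, ← hm]
        have := hhv' i
        rwa [hmin, min_eq_left hlt.le] at this
end
end

section
/- Let I be a fractional ideal of O and ν ∈ ℤ^p with ν + ℕ^p ⊆ val(I). Then for every v ∈ ℤ^p: v ∈ val(I) if and only if inf(v, ν) ∈ val(I). In particular the set val(I) ∩ {v ∈ ℤ^p : v ≤ ν} determines val(I). -/
open scoped Classical

set_option synthInstance.maxHeartbeats 1000000
set_option maxHeartbeats 1000000

noncomputable section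

-- Auxiliary lemmas


lemma order_eq_of' (g : LaurentSeries ℂ) (n : ℤ) (hn : g.coeff n ≠ 0)
    (hlow : ∀ j : ℤ, j < n → g.coeff j = 0) : g ≠ 0 ∧ g.order = n := by
  have hg : g ≠ 0 := HahnSeries.ne_zero_of_coeff_ne_zero hn
  refine ⟨hg, le_antisymm (HahnSeries.order_le_of_coeff_ne_zero hn) ?_⟩
  by_contra hlt
  exact (HahnSeries.coeff_order_eq_zero.not.2 hg) (hlow _ (lt_of_not_ge hlt))

lemma exists_good_c {p : ℕ} (bad : Fin p → ℂ) : ∃ c : ℂ, c ≠ 0 ∧ ∀ i, c ≠ bad i := by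
  have hfin : (insert (0:ℂ) (Set.range bad)).Finite :=
    (Set.finite_range bad).insert 0
  obtain ⟨c, hc⟩ := hfin.infinite_compl.nonempty
  simp only [Set.mem_compl_iff, Set.mem_insert_iff, Set.mem_range, not_or, not_exists] at hc
  exact ⟨c, hc.1, fun i h => hc.2 i h.symm⟩

/-- Generic combination: orders become the componentwise minimum. -/
lemma combine_min {p : ℕ} (g h : KK p) (a b : Fin p → ℤ)
    (hg : ∀ i, g i ≠ 0 ∧ (g i).order = a i)
    (hh : ∀ i, h i ≠ 0 ∧ (h i).order = b i) :
    ∃ c : ℂ, ∀ i, (g + c • h) i ≠ 0 ∧ ((g + c • h) i).order = min (a i) (b i) := by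
  obtain ⟨c, hc0, hcb⟩ := exists_good_c (fun i => -((g i).coeff (a i)) / ((h i).coeff (b i)))
  refine ⟨c, fun i => ?_⟩
  have hgi := (hg i).1; have hga := (hg i).2; have hhi := (hh i).1; have hhb := (hh i).2
  have hgl : (g i).coeff (a i) ≠ 0 := hga ▸ HahnSeries.coeff_order_eq_zero.not.2 hgi
  have hhl : (h i).coeff (b i) ≠ 0 := hhb ▸ HahnSeries.coeff_order_eq_zero.not.2 hhi
  have hglow : ∀ j : ℤ, j < a i → (g i).coeff j = 0 := fun j hj =>
    HahnSeries.coeff_eq_zero_of_lt_order (hga ▸ hj)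
  have hhlow : ∀ j : ℤ, j < b i → (h i).coeff j = 0 := fun j hj =>
    HahnSeries.coeff_eq_zero_of_lt_order (hhb ▸ hj)
  have hcoeff : ∀ j : ℤ, ((g + c • h) i).coeff j = (g i).coeff j + c * (h i).coeff j := by
    intro j
    simp [HahnSeries.coeff_add, HahnSeries.coeff_smul, smul_eq_mul]
  have hlow : ∀ j : ℤ, j < min (a i) (b i) → ((g + c • h) i).coeff j = 0 := by
    intro j hj
    rw [hcoeff, hglow j (lt_of_lt_of_le hj (min_le_left _ _)),
      hhlow j (lt_of_lt_of_le hj (min_le_right _ _)), mul_zero, add_zero]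
  have hne : ((g + c • h) i).coeff (min (a i) (b i)) ≠ 0 := by
    rw [hcoeff]
    rcases lt_trichotomy (a i) (b i) with hlt | heq | hgt
    · rw [min_eq_left hlt.le, hhlow _ hlt, mul_zero, add_zero]; exact hgl
    · rw [min_eq_left heq.le, heq]
      intro hzero
      apply hcb i
      rw [eq_div_iff hhl, heq]
      linear_combination hzero
    · rw [min_eq_right hgt.le, hglow _ hgt, zero_add]
      exact mul_ne_zero hc0 hhl
  exact order_eq_of' _ _ hne hlow

/-- Cancellation at coordinate `k`. -/
lemma cancel_at {p : ℕ} (g h : KK p) (a b : Fin p → ℤ) (k : Fin p)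
    (hg : ∀ i, g i ≠ 0 ∧ (g i).order = a i)
    (hh : ∀ i, h i ≠ 0 ∧ (h i).order = b i)
    (hk : b k = a k) (hne : ∀ i, i ≠ k → a i < b i) :
    ∃ c : ℂ, (∀ i, i ≠ k → ((g + c • h) i ≠ 0 ∧ ((g + c • h) i).order = a i)) ∧
      (∀ j : ℤ, j ≤ a k → ((g + c • h) k).coeff j = 0) := by
  have hhl : (h k).coeff (b k) ≠ 0 := (hh k).2 ▸ HahnSeries.coeff_order_eq_zero.not.2 (hh k).1
  obtain ⟨c, hch⟩ : ∃ c : ℂ, c * (h k).coeff (b k) = -((g k).coeff (a k)) :=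
    ⟨-((g k).coeff (a k)) / ((h k).coeff (b k)), by field_simp⟩
  refine ⟨c, ?_, ?_⟩
  · intro i hik
    have hga := (hg i).2; have hhb := (hh i).2
    have hgl : (g i).coeff (a i) ≠ 0 := hga ▸ HahnSeries.coeff_order_eq_zero.not.2 (hg i).1
    have hne' : ((g + c • h) i).coeff (a i) ≠ 0 := by
      have h0 : (h i).coeff (a i) = 0 :=
        HahnSeries.coeff_eq_zero_of_lt_order (hhb ▸ hne i hik)
      simpa [HahnSeries.coeff_add, HahnSeries.coeff_smul, h0] using hgl
    refine order_eq_of' _ _ hne' (fun j hj => ?_)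
    have h0 : (h i).coeff j = 0 :=
      HahnSeries.coeff_eq_zero_of_lt_order (hhb ▸ hj.trans (hne i hik))
    have g0 : (g i).coeff j = 0 := HahnSeries.coeff_eq_zero_of_lt_order (hga ▸ hj)
    simp [HahnSeries.coeff_add, HahnSeries.coeff_smul, h0, g0]
  · intro j hj
    rcases lt_or_eq_of_le hj with hj | hj
    · have g0 : (g k).coeff j = 0 := HahnSeries.coeff_eq_zero_of_lt_order ((hg k).2 ▸ hj)
      have h0 : (h k).coeff j = 0 := HahnSeries.coeff_eq_zero_of_lt_order ((hh k).2 ▸ hk ▸ hj)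
      simp [HahnSeries.coeff_add, HahnSeries.coeff_smul, h0, g0]
    · have hhj : (h k).coeff j = (h k).coeff (b k) := by rw [hj, hk]
      simp only [Pi.add_apply, Pi.smul_apply, HahnSeries.coeff_add, HahnSeries.coeff_smul,
        smul_eq_mul, hhj, hch, hj]
      have h2 : (h k).coeff (a k) = (h k).coeff (b k) := by rw [hk]
      rw [h2]
      linear_combination hch

/-- Bump: raise the order at coordinate `k` by one. -/
lemma bump {p : ℕ} (x h : KK p) (a b : Fin p → ℤ) (k : Fin p)
    (hx1 : ∀ i, i ≠ k → x i ≠ 0 ∧ (x i).order = a i)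
    (hx2 : ∀ j : ℤ, j ≤ a k → (x k).coeff j = 0)
    (hh : ∀ i, h i ≠ 0 ∧ (h i).order = b i)
    (hbk : b k = a k + 1) (hbi : ∀ i, i ≠ k → a i < b i) :
    ∃ c : ℂ, ∀ i, (x + c • h) i ≠ 0 ∧
      ((x + c • h) i).order = (if i = k then a k + 1 else a i) := by
  obtain ⟨c, hc0, hcb⟩ := exists_good_c (fun i => -((x i).coeff (b i)) / ((h i).coeff (b i)))
  refine ⟨c, fun i => ?_⟩
  have hhb := (hh i).2
  have hhl : (h i).coeff (b i) ≠ 0 := hhb ▸ HahnSeries.coeff_order_eq_zero.not.2 (hh i).1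
  by_cases hik : i = k
  · subst hik
    simp only [if_pos rfl]
    have hne : ((x + c • h) i).coeff (a i + 1) ≠ 0 := by
      simp only [Pi.add_apply, Pi.smul_apply, HahnSeries.coeff_add, HahnSeries.coeff_smul,
        smul_eq_mul]
      intro hzero
      apply hcb i
      rw [eq_div_iff hhl, hbk]
      linear_combination hzero
    refine order_eq_of' _ _ hne (fun j hj => ?_)
    have x0 : (x i).coeff j = 0 := hx2 j (by omega)
    have h0 : (h i).coeff j = 0 := HahnSeries.coeff_eq_zero_of_lt_order (by rw [hhb, hbk]; exact hj)
    simp [HahnSeries.coeff_add, HahnSeries.coeff_smul, x0, h0]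
  · simp only [if_neg hik]
    have hxa := (hx1 i hik).2
    have hxl : (x i).coeff (a i) ≠ 0 := hxa ▸ HahnSeries.coeff_order_eq_zero.not.2 (hx1 i hik).1
    have hne : ((x + c • h) i).coeff (a i) ≠ 0 := by
      have h0 : (h i).coeff (a i) = 0 :=
        HahnSeries.coeff_eq_zero_of_lt_order (hhb ▸ hbi i hik)
      simpa [HahnSeries.coeff_add, HahnSeries.coeff_smul, h0] using hxl
    refine order_eq_of' _ _ hne (fun j hj => ?_)
    have x0 : (x i).coeff j = 0 := HahnSeries.coeff_eq_zero_of_lt_order (hxa ▸ hj)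
    have h0 : (h i).coeff j = 0 :=
      HahnSeries.coeff_eq_zero_of_lt_order (hhb ▸ hj.trans (hbi i hik))
    simp [HahnSeries.coeff_add, HahnSeries.coeff_smul, x0, h0]

/-- `v ∈ val(I)` iff `inf(v, ν) ∈ val(I)`; in particular
`val(I) ∩ {v ≤ ν}` determines `val(I)`. -/
theorem mem_vals_iff_inf_mem {p : ℕ} (hp : 1 ≤ p) (O : Subalgebra ℂ (KK p))
    (hO : (O : Set (KK p)) ⊆ (stdMod p 0 : Set (KK p)))
    (I : Submodule ℂ (KK p)) (hI : IsFracIdeal O I)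
    (ν : Fin p → ℤ) (hν : ∀ w : Fin p → ℤ, ν ≤ w → w ∈ vals (I : Set (KK p)))
    (v : Fin p → ℤ) :
    v ∈ vals (I : Set (KK p)) ↔ (fun i => min (v i) (ν i)) ∈ vals (I : Set (KK p)) := by
  have hval : ∀ (u : Fin p → ℤ), u ∈ vals (I : Set (KK p)) ↔
      ∃ g ∈ I, ∀ i, g i ≠ 0 ∧ (g i).order = u i := by
    intro u
    constructor
    · rintro ⟨g, hgI, hg⟩
      refine ⟨g, hgI, fun i => ?_⟩
      have h := hg i
      unfold valC at h
      by_cases h0 : g i = 0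
      · rw [if_pos h0] at h; exact absurd h (by simp)
      · rw [if_neg h0] at h
        exact ⟨h0, by exact_mod_cast h⟩
    · rintro ⟨g, hgI, hg⟩
      refine ⟨g, hgI, fun i => ?_⟩
      unfold valC
      rw [if_neg (hg i).1, (hg i).2]
  constructor
  · intro hv
    rw [hval] at hv ⊢
    obtain ⟨g, hgI, hg⟩ := hv
    obtain ⟨h, hhI, hh⟩ := (hval ν).1 (hν ν le_rfl)
    obtain ⟨c, hc⟩ := combine_min g h v ν hg hh
    exact ⟨g + c • h, I.add_mem hgI (I.smul_mem c hhI), hc⟩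
  · intro hv
    have key : ∀ n : ℕ, ∀ u : Fin p → ℤ, ∑ i, (v i - u i).toNat = n →
        (∀ i, min (v i) (ν i) ≤ u i) → (∀ i, u i ≤ v i) →
        (∃ g ∈ I, ∀ i, g i ≠ 0 ∧ (g i).order = u i) →
        v ∈ vals (I : Set (KK p)) := by
      intro n
      induction n using Nat.strong_induction_on with
      | _ n IH =>
        rintro u hsum hlo hhi ⟨g, hgI, hg⟩
        by_cases huv : ∀ i, u i = v i
        · rw [hval]
          exact ⟨g, hgI, fun i => ⟨(hg i).1, (hg i).2.trans (huv i)⟩⟩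
        · push_neg at huv
          obtain ⟨k, hk⟩ := huv
          have hklt : u k < v k := lt_of_le_of_ne (hhi k) hk
          have hnuk : ν k ≤ u k := by have := hlo k; omega
          set b : Fin p → ℤ := fun i => if i = k then u k else max (u i) (ν i) + 1 with hbdef
          have hνb : ν ≤ b := by
            intro i
            by_cases h : i = k <;> simp only [hbdef, h, if_pos, if_neg, if_true, if_false] <;> omega
          obtain ⟨h, hhI, hh⟩ := (hval b).1 (hν b hνb)
          obtain ⟨c, hcomp, hcancel⟩ := cancel_at g h u b k hg hh
            (by simp [hbdef])
            (fun i hik => by simp only [hbdef, if_neg hik]; omega)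
          have hxI : g + c • h ∈ I := I.add_mem hgI (I.smul_mem c hhI)
          set b' : Fin p → ℤ := fun i => if i = k then u k + 1 else max (u i) (ν i) + 1
            with hb'def
          have hνb' : ν ≤ b' := by
            intro i
            by_cases h : i = k <;> simp only [hb'def, h, if_pos, if_neg, if_true, if_false] <;>
              omega
          obtain ⟨h', hh'I, hh'⟩ := (hval b').1 (hν b' hνb')
          obtain ⟨c', hc'⟩ := bump (g + c • h) h' u b' k hcomp hcancel hh'
            (by simp [hb'def])
            (fun i hik => by simp only [hb'def, if_neg hik]; omega)
          set u' : Fin p → ℤ := fun i => if i = k then u k + 1 else u i with hu'def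
          have hlt : ∑ i, (v i - u' i).toNat < n := by
            rw [← hsum]
            refine Finset.sum_lt_sum (fun i _ => ?_) ⟨k, Finset.mem_univ k, ?_⟩
            · by_cases h : i = k <;> simp only [hu'def, h, if_pos, if_neg, if_true, if_false] <;>
                omega
            · simp only [hu'def, if_pos, if_true]
              omega
          refine IH _ hlt u' rfl (fun i => ?_) (fun i => ?_)
            ⟨g + c • h + c' • h', I.add_mem hxI (I.smul_mem c' hh'I), fun i => ?_⟩
          · by_cases h : i = k <;> simp only [hu'def, h, if_pos, if_neg, if_true, if_false]
            · have := hlo k; omega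
            · exact hlo i
          · by_cases h : i = k <;> simp only [hu'def, h, if_pos, if_neg, if_true, if_false]
            · omega
            · exact hhi i
          · exact hc' i
    obtain ⟨g, hgI, hg⟩ := (hval _).1 hv
    exact key _ (fun i => min (v i) (ν i)) rfl (fun i => le_rfl) (fun i => min_le_left _ _)
      ⟨g, hgI, hg⟩
end
end
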